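/- Let A : X → X, C : X → Y be linear maps on finite-dimensional complex inner product spaces. If the Stein inequality A* Y₀ A - Y₀ - C* C < 0 has a positive-definite solution Y₀, then there exists L : Y → X with A + LC having spectral radius less than 1. -/

import Mathlib

open Matrix
open scoped ComplexOrder

/-- Cauchy–Schwarz inequality for the semi-inner product induced by a positive
semidefinite matrix. -/
lemma posSemidef_cauchy_schwarz {n : Type*} [Fintype n] [DecidableEq n]
    {P : Matrix n n ℂ} (hP : P.PosSemidef) (x z : n → ℂ) :
    ‖star x ⬝ᵥ (P *ᵥ z)‖ ^ 2 ≤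
      (star x ⬝ᵥ (P *ᵥ x)).re * (star z ⬝ᵥ (P *ᵥ z)).re := by
  obtain ⟨R, hRR, hRH⟩ : ∃ R : Matrix n n ℂ, R * R = P ∧ Rᴴ = R := by
    open scoped MatrixOrder in
    exact ⟨CFC.sqrt P, CFC.sqrt_mul_sqrt_self P hP.nonneg,
      (Matrix.nonneg_iff_posSemidef.mp (CFC.sqrt_nonneg P)).isHermitian⟩
  have key : ∀ a b : n → ℂ,
      star a ⬝ᵥ (P *ᵥ b) = star (R *ᵥ a) ⬝ᵥ (R *ᵥ b) := by
    intro a b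
    rw [star_mulVec, hRH, ← hRR, ← Matrix.mulVec_mulVec, dotProduct_mulVec]
  have hx := key x x
  have hz := key z z
  have hxz := key x z
  -- move to EuclideanSpace
  set p : EuclideanSpace ℂ n := (WithLp.equiv 2 _).symm (R *ᵥ x) with hp
  set q : EuclideanSpace ℂ n := (WithLp.equiv 2 _).symm (R *ᵥ z) with hq
  have hip : inner ℂ p p = star (R *ᵥ x) ⬝ᵥ (R *ᵥ x) := by
    rw [dotProduct_comm]; rfl
  have hiq : inner ℂ q q = star (R *ᵥ z) ⬝ᵥ (R *ᵥ z) := by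
    rw [dotProduct_comm]; rfl
  have hipq : inner ℂ p q = star (R *ᵥ x) ⬝ᵥ (R *ᵥ z) := by
    rw [dotProduct_comm]; rfl
  have hCS : ‖(inner ℂ p q : ℂ)‖ ≤ ‖p‖ * ‖q‖ := norm_inner_le_norm p q
  have hps : (‖p‖ : ℝ) ^ 2 = Complex.re (inner ℂ p p) := by
    rw [← @inner_self_eq_norm_sq ℂ]; rfl
  have hqs : (‖q‖ : ℝ) ^ 2 = Complex.re (inner ℂ q q) := by
    rw [← @inner_self_eq_norm_sq ℂ]; rfl
  have h1 : ‖star x ⬝ᵥ (P *ᵥ z)‖ ^ 2 ≤ (‖p‖ * ‖q‖) ^ 2 := by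
    rw [hxz, ← hipq]
    exact pow_le_pow_left₀ (norm_nonneg _) hCS 2
  calc ‖star x ⬝ᵥ (P *ᵥ z)‖ ^ 2 ≤ (‖p‖ * ‖q‖) ^ 2 := h1
    _ = ‖p‖ ^ 2 * ‖q‖ ^ 2 := by ring
    _ = (star x ⬝ᵥ (P *ᵥ x)).re * (star z ⬝ᵥ (P *ᵥ z)).re := by
        rw [hps, hqs, hip, hiq, hx, hz]

/-- If the Stein inequality `A* Y₀ A - Y₀ - C* C < 0` has a positive definite
solution `Y₀`, then there is an output injection `L` so that `A + L C` has
spectral radius less than `1`. -/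
theorem stein_implies_operator_detectable {n y : Type*} [Fintype n] [Fintype y]
    [DecidableEq n]
    (A : Matrix n n ℂ) (C : Matrix y n ℂ)
    (h : ∃ Y₀ : Matrix n n ℂ, Y₀.PosDef ∧ (-(Aᴴ * Y₀ * A - Y₀ - Cᴴ * C)).PosDef) :
    ∃ L : Matrix n y ℂ, ∀ μ ∈ spectrum ℂ (A + L * C), ‖μ‖ < 1 := by
  obtain ⟨Y₀, hY, hQ⟩ := h
  set Qm : Matrix n n ℂ := -(Aᴴ * Y₀ * A - Y₀ - Cᴴ * C) with hQm
  set S : Matrix n n ℂ := Y₀ + Cᴴ * C with hSdef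
  have hS : S.PosDef := hY.add_posSemidef (posSemidef_conjTranspose_mul_self C)
  have hSunit : IsUnit S.det := hS.det_pos.ne'.isUnit
  refine ⟨-(A * S⁻¹ * Cᴴ), ?_⟩
  have hM : A + -(A * S⁻¹ * Cᴴ) * C = A * S⁻¹ * Y₀ := by
    have h1 : A * S⁻¹ * S = A := by
      rw [Matrix.mul_assoc, Matrix.nonsing_inv_mul S hSunit, Matrix.mul_one]
    have h2 : A * S⁻¹ * S = A * S⁻¹ * Y₀ + A * S⁻¹ * (Cᴴ * C) := by
      rw [hSdef, Matrix.mul_add]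
    have h3 : A * S⁻¹ * Y₀ = A - A * S⁻¹ * (Cᴴ * C) := by
      rw [eq_sub_iff_add_eq, ← h2]; exact h1
    rw [h3, Matrix.neg_mul, Matrix.mul_assoc (A * S⁻¹) Cᴴ C, sub_eq_add_neg]
  rw [hM]
  intro μ hμ
  -- extract an eigenvector
  have hdet : (μ • (1 : Matrix n n ℂ) - A * S⁻¹ * Y₀).det = 0 := by
    rw [spectrum.mem_iff] at hμ
    by_contra hne
    exact hμ <| by
      rw [Matrix.isUnit_iff_isUnit_det]
      simpa [Algebra.algebraMap_eq_smul_one] using (IsUnit.mk0 _ hne)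
  obtain ⟨v, hv0, hveq⟩ := (Matrix.exists_mulVec_eq_zero_iff).mpr hdet
  have heig : (A * S⁻¹ * Y₀) *ᵥ v = μ • v := by
    have := hveq
    rw [Matrix.sub_mulVec, sub_eq_zero] at this
    rw [← this, Matrix.smul_mulVec, Matrix.one_mulVec]
  -- set up vectors
  set u : n → ℂ := S⁻¹ *ᵥ (Y₀ *ᵥ v) with hu
  have hSu : S *ᵥ u = Y₀ *ᵥ v := by
    rw [hu, Matrix.mulVec_mulVec, Matrix.mul_nonsing_inv S hSunit, Matrix.one_mulVec]
  have hYv0 : Y₀ *ᵥ v ≠ 0 := by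
    intro hc
    apply hv0
    have hinj := Matrix.mulVec_injective_iff_isUnit.mpr hY.isUnit
    exact hinj (by simpa [Matrix.mulVec_zero] using hc)
  have hu0 : u ≠ 0 := by
    intro hc
    apply hYv0
    rw [← hSu, hc, Matrix.mulVec_zero]
  have hAu : (A * S⁻¹ * Y₀) *ᵥ v = A *ᵥ u := by
    rw [hu, Matrix.mulVec_mulVec, Matrix.mulVec_mulVec, Matrix.mul_assoc]
  -- scalar quantities
  set b : ℂ := star v ⬝ᵥ (Y₀ *ᵥ v) with hb
  set c : ℂ := star u ⬝ᵥ (S *ᵥ u) with hc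
  set a : ℂ := star u ⬝ᵥ (Y₀ *ᵥ u) with ha
  have hbpos : 0 < b := hY.dotProduct_mulVec_pos hv0
  have hcpos : 0 < c := hS.dotProduct_mulVec_pos hu0
  have hac : a ≤ c := by
    have h1 : c - a = star u ⬝ᵥ ((Cᴴ * C) *ᵥ u) := by
      rw [hc, ha, hSdef, Matrix.add_mulVec, dotProduct_add]
      ring
    have h2 : 0 ≤ star u ⬝ᵥ ((Cᴴ * C) *ᵥ u) :=
      (posSemidef_conjTranspose_mul_self C).dotProduct_mulVec_nonneg u
    rw [← sub_nonneg, h1]; exact h2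
  have hQpos : 0 < star u ⬝ᵥ (Qm *ᵥ u) := hQ.dotProduct_mulVec_pos hu0
  -- the eigen-identity : normSq μ * b = c - star u ⬝ᵥ (Qm *ᵥ u)
  have hAYA : Aᴴ * Y₀ * A = S - Qm := by
    rw [hSdef, hQm]; noncomm_ring
  have hkey : (Complex.normSq μ : ℂ) * b = c - star u ⬝ᵥ (Qm *ᵥ u) := by
    have h1 : star (μ • v) ⬝ᵥ (Y₀ *ᵥ (μ • v)) = (Complex.normSq μ : ℂ) * b := by
      have hns : (Complex.normSq μ : ℂ) = star μ * μ := by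
        rw [Complex.normSq_eq_conj_mul_self]; rfl
      rw [Matrix.mulVec_smul, star_smul, smul_dotProduct, dotProduct_smul, hb, hns,
        smul_eq_mul, smul_eq_mul]
      ring
    have h2 : star (A *ᵥ u) ⬝ᵥ (Y₀ *ᵥ (A *ᵥ u)) = star u ⬝ᵥ ((Aᴴ * Y₀ * A) *ᵥ u) := by
      simp only [star_mulVec, dotProduct_mulVec, Matrix.vecMul_vecMul]
    have h3 : star u ⬝ᵥ ((Aᴴ * Y₀ * A) *ᵥ u) = c - star u ⬝ᵥ (Qm *ᵥ u) := by
      rw [hAYA, Matrix.sub_mulVec, dotProduct_sub, hc]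
    rw [← h1, ← heig, hAu, h2, h3]
  -- Cauchy-Schwarz step : c.re ≤ b.re
  have hcb : c.re ≤ b.re := by
    have hcY : c = star u ⬝ᵥ (Y₀ *ᵥ v) := by rw [hc, hSu]
    have hCS := posSemidef_cauchy_schwarz hY.posSemidef u v
    rw [← hcY] at hCS
    have hcrepos : 0 < c.re := by
      have := hcpos; rw [Complex.lt_def] at this; exact this.1
    have hcim : c.im = 0 := by
      have := hcpos; rw [Complex.lt_def] at this
      simpa using this.2.symm
    have hcre : ‖c‖ = c.re := by
      rw [Complex.norm_def, Complex.normSq_apply, hcim,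
        mul_zero, add_zero, Real.sqrt_mul_self hcrepos.le]
    have hare : a.re ≤ c.re := by
      rw [Complex.le_def] at hac; exact hac.1
    have hbrepos : 0 < b.re := by
      have := hbpos; rw [Complex.lt_def] at this; exact this.1
    nlinarith [hCS, hcre, hare, hcrepos, hbrepos]
  -- conclude
  have hQre : 0 < (star u ⬝ᵥ (Qm *ᵥ u)).re := by
    have := hQpos; rw [Complex.lt_def] at this; exact this.1
  have hbrepos : 0 < b.re := by
    have := hbpos; rw [Complex.lt_def] at this; exact this.1
  have hre : Complex.normSq μ * b.re = c.re - (star u ⬝ᵥ (Qm *ᵥ u)).re := by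
    have := congrArg Complex.re hkey
    simpa [Complex.sub_re] using this
  have hns : Complex.normSq μ < 1 := by
    nlinarith
  have : ‖μ‖ ^ 2 = Complex.normSq μ := by
    rw [Complex.sq_norm]
  nlinarith [norm_nonneg μ, this]
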